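/- The set of sums of two rank-one tensors, {a⊗b⊗c + a'⊗b'⊗c' : a, b, c, a', b', c' ∈ ℂ²}, is dense in ℂ² ⊗ ℂ² ⊗ ℂ² (with respect to the standard topology on this finite-dimensional complex vector space). (The secant variety σ(ℙ¹×ℙ¹×ℙ¹) has the expected dimension 7 and fills ℙ⁷.) -/

import Mathlib

open TensorProduct

noncomputable section

/-- The single-qubit space ℂ². -/
abbrev Qubit : Type := Fin 2 → ℂ

/-- The three-qubit Hilbert space ℂ² ⊗ ℂ² ⊗ ℂ². -/
abbrev ThreeQubit : Type := Qubit ⊗[ℂ] (Qubit ⊗[ℂ] Qubit)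

/-- Standard basis vector e₀ of ℂ². -/
def e0 : Qubit := ![1, 0]

/-- Standard basis vector e₁ of ℂ². -/
def e1 : Qubit := ![0, 1]

/-- SLOCC equivalence: ψ and φ are related by invertible local linear maps. -/
def SLOCC (ψ φ : ThreeQubit) : Prop :=
  ∃ g₁ g₂ g₃ : Qubit ≃ₗ[ℂ] Qubit,
    TensorProduct.map g₁.toLinearMap
      (TensorProduct.map g₂.toLinearMap g₃.toLinearMap) ψ = φ

def SepState : ThreeQubit := e0 ⊗ₜ[ℂ] (e0 ⊗ₜ[ℂ] e0)
def B1 : ThreeQubit := e0 ⊗ₜ[ℂ] (e0 ⊗ₜ[ℂ] e0) + e0 ⊗ₜ[ℂ] (e1 ⊗ₜ[ℂ] e1)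
def B2 : ThreeQubit := e0 ⊗ₜ[ℂ] (e0 ⊗ₜ[ℂ] e0) + e1 ⊗ₜ[ℂ] (e0 ⊗ₜ[ℂ] e1)
def B3 : ThreeQubit := e0 ⊗ₜ[ℂ] (e0 ⊗ₜ[ℂ] e0) + e1 ⊗ₜ[ℂ] (e1 ⊗ₜ[ℂ] e0)
def W : ThreeQubit := e1 ⊗ₜ[ℂ] (e0 ⊗ₜ[ℂ] e0) + e0 ⊗ₜ[ℂ] (e1 ⊗ₜ[ℂ] e0) + e0 ⊗ₜ[ℂ] (e0 ⊗ₜ[ℂ] e1)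
def GHZ : ThreeQubit := e0 ⊗ₜ[ℂ] (e0 ⊗ₜ[ℂ] e0) + e1 ⊗ₜ[ℂ] (e1 ⊗ₜ[ℂ] e1)

/-- The standard basis e_i ⊗ e_j ⊗ e_k of the three-qubit space. -/
def stdBasis : Module.Basis (Fin 2 × Fin 2 × Fin 2) ℂ ThreeQubit :=
  (Pi.basisFun ℂ (Fin 2)).tensorProduct
    ((Pi.basisFun ℂ (Fin 2)).tensorProduct (Pi.basisFun ℂ (Fin 2)))


/-! ### Auxiliary machinery for the density proof -/

def eB : Fin 2 → Qubit := ![e0, e1]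

lemma pi_single_eq (i : Fin 2) : (Pi.single i 1 : Qubit) = eB i := by
  funext j
  fin_cases i <;> fin_cases j <;> simp [eB, e0, e1]

lemma stdBasis_apply (p : Fin 2 × Fin 2 × Fin 2) :
    stdBasis p = eB p.1 ⊗ₜ[ℂ] (eB p.2.1 ⊗ₜ[ℂ] eB p.2.2) := by
  obtain ⟨i, j, k⟩ := p
  simp only [stdBasis, Module.Basis.tensorProduct_apply', Pi.basisFun_apply, pi_single_eq]

lemma vec_expand (x y : ℂ) : (![x, y] : Qubit) = x • e0 + y • e1 := by
  funext j; fin_cases j <;> simp [e0, e1]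

lemma tmul_expand (x y z w : ℂ) :
    (![x,y] : Qubit) ⊗ₜ[ℂ] (![z,w] : Qubit)
      = (x*z) • (e0 ⊗ₜ[ℂ] e0) + (x*w) • (e0 ⊗ₜ[ℂ] e1)
        + (y*z) • (e1 ⊗ₜ[ℂ] e0) + (y*w) • (e1 ⊗ₜ[ℂ] e1) := by
  rw [vec_expand x y, vec_expand z w]
  simp only [add_tmul, tmul_add, smul_tmul, tmul_smul, smul_smul]
  module

lemma rankOne (p q r s : ℂ) (h : p * s = q * r) :
    ∃ b c : Qubit, b ⊗ₜ[ℂ] c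
      = p • (e0 ⊗ₜ[ℂ] e0) + q • (e0 ⊗ₜ[ℂ] e1)
        + r • (e1 ⊗ₜ[ℂ] e0) + s • (e1 ⊗ₜ[ℂ] e1) := by
  by_cases hp : p = 0
  · subst hp
    rcases mul_eq_zero.1 (h.symm.trans (zero_mul s)) with hq | hr
    · subst hq
      exact ⟨![0,1], ![r,s], by rw [tmul_expand]; module⟩
    · subst hr
      refine ⟨![q,s], ![0,1], by rw [tmul_expand]; module⟩
  · refine ⟨![p,r], ![1, q/p], ?_⟩
    rw [tmul_expand]
    have h1 : p * (q / p) = q := by field_simp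
    have h2 : r * (q / p) = s := by field_simp; linear_combination -h
    rw [h1, h2, mul_one, mul_one]

lemma decompose (t000 t001 t010 t011 t100 t101 t110 t111 : ℂ)
    (h : (t000*t011 - t001*t010) *
      ((t000*t111 + t011*t100 - t001*t110 - t010*t101)^2
        - 4*(t000*t011 - t001*t010)*(t100*t111 - t101*t110)) ≠ 0) :
    ∃ a b c a' b' c' : Qubit,
      t000 • (e0 ⊗ₜ[ℂ] (e0 ⊗ₜ[ℂ] e0)) + t001 • (e0 ⊗ₜ[ℂ] (e0 ⊗ₜ[ℂ] e1))
      + t010 • (e0 ⊗ₜ[ℂ] (e1 ⊗ₜ[ℂ] e0)) + t011 • (e0 ⊗ₜ[ℂ] (e1 ⊗ₜ[ℂ] e1))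
      + t100 • (e1 ⊗ₜ[ℂ] (e0 ⊗ₜ[ℂ] e0)) + t101 • (e1 ⊗ₜ[ℂ] (e0 ⊗ₜ[ℂ] e1))
      + t110 • (e1 ⊗ₜ[ℂ] (e1 ⊗ₜ[ℂ] e0)) + t111 • (e1 ⊗ₜ[ℂ] (e1 ⊗ₜ[ℂ] e1))
        = a ⊗ₜ[ℂ] (b ⊗ₜ[ℂ] c) + a' ⊗ₜ[ℂ] (b' ⊗ₜ[ℂ] c') := by
  set A := t000*t011 - t001*t010 with hAdef
  set Bq := t000*t111 + t011*t100 - t001*t110 - t010*t101 with hBdef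
  set Cq := t100*t111 - t101*t110 with hCdef
  have hA : A ≠ 0 := left_ne_zero_of_mul h
  have hD : Bq^2 - 4*A*Cq ≠ 0 := right_ne_zero_of_mul h
  obtain ⟨δ, hδ2⟩ : ∃ δ : ℂ, δ^2 = Bq^2 - 4*A*Cq :=
    IsAlgClosed.exists_pow_nat_eq _ two_pos
  have hδ : δ ≠ 0 := fun h0 => hD (by rw [← hδ2, h0]; ring)
  set l1 := (Bq + δ)/(2*A) with hl1
  set l2 := (Bq - δ)/(2*A) with hl2
  have key : (A/δ) * (l1 - l2) = 1 := by
    rw [hl1, hl2]; field_simp; ring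
  have haux : ∀ s : ℂ, A*((Bq+s)/(2*A))^2 - Bq*((Bq+s)/(2*A)) + Cq
      = (s^2 - (Bq^2 - 4*A*Cq))/(4*A) := by
    intro s; field_simp; ring
  have hq2 : A*l2^2 - Bq*l2 + Cq = 0 := by
    rw [hl2, sub_eq_add_neg Bq δ, haux (-δ)]
    rw [neg_pow, ← hδ2]; simp [hδ2]
  have hq1 : A*l1^2 - Bq*l1 + Cq = 0 := by
    rw [hl1, haux δ, hδ2]; simp
  obtain ⟨b, c, hbc⟩ := rankOne ((A/δ)*(t100 - l2*t000)) ((A/δ)*(t101 - l2*t001))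
    ((A/δ)*(t110 - l2*t010)) ((A/δ)*(t111 - l2*t011))
    (by linear_combination ((A/δ)^2) * hq2)
  obtain ⟨b', c', hbc'⟩ := rankOne ((A/δ)*(l1*t000 - t100)) ((A/δ)*(l1*t001 - t101))
    ((A/δ)*(l1*t010 - t110)) ((A/δ)*(l1*t011 - t111))
    (by linear_combination ((A/δ)^2) * hq1)
  refine ⟨![1, l1], b, c, ![1, l2], b', c', ?_⟩
  rw [hbc, hbc', vec_expand 1 l1, vec_expand 1 l2]
  simp only [add_tmul, tmul_add, tmul_smul, ← smul_tmul', smul_smul, one_smul, one_mul]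
  match_scalars
  · linear_combination (-t000) * key
  · linear_combination (-t001) * key
  · linear_combination (-t010) * key
  · linear_combination (-t011) * key
  · linear_combination (-t100) * key
  · linear_combination (-t101) * key
  · linear_combination (-t110) * key
  · linear_combination (-t111) * key

/-- The hyperdeterminant-like polynomial expression deciding decomposability. -/
def Pexpr {R : Type*} [CommRing R] (t : Fin 2 → Fin 2 → Fin 2 → R) : R :=
  (t 0 0 0 * t 0 1 1 - t 0 0 1 * t 0 1 0) *
    ((t 0 0 0 * t 1 1 1 + t 0 1 1 * t 1 0 0 - t 0 0 1 * t 1 1 0 - t 0 1 0 * t 1 0 1)^2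
      - 4*(t 0 0 0 * t 0 1 1 - t 0 0 1 * t 0 1 0)*(t 1 0 0 * t 1 1 1 - t 1 0 1 * t 1 1 0))

lemma Pexpr_eval (x v : Fin 2 → Fin 2 → Fin 2 → ℂ) (s : ℂ) :
    Polynomial.eval s (Pexpr (fun i j k =>
        Polynomial.C (x i j k) + Polynomial.C (v i j k) * Polynomial.X))
      = Pexpr (fun i j k => x i j k + v i j k * s) := by
  simp [Pexpr]

def yfun : Fin 2 × Fin 2 × Fin 2 → ℂ :=
  fun p => if p = (0,0,0) then 1 else if p = (0,1,1) then 1 else if p = (1,1,1) then 1 else 0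

/-- The standard (unique Hausdorff vector-space) topology on the finite-dimensional space
ℂ²⊗ℂ²⊗ℂ², induced from the coordinate norm. -/
instance : NormedAddCommGroup ThreeQubit :=
  NormedAddCommGroup.induced ThreeQubit (Fin 2 × Fin 2 × Fin 2 → ℂ)
    stdBasis.equivFun.toLinearMap stdBasis.equivFun.injective

instance : NormedSpace ℂ ThreeQubit :=
  NormedSpace.induced ℂ ThreeQubit (Fin 2 × Fin 2 × Fin 2 → ℂ) stdBasis.equivFun.toLinearMap

/-- The set of sums of two rank-one tensors is dense in ℂ²⊗ℂ²⊗ℂ²: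
the secant variety σ(ℙ¹×ℙ¹×ℙ¹) fills ℙ⁷. -/
theorem sums_of_two_rank_one_dense :
    Dense {ψ : ThreeQubit | ∃ a b c a' b' c' : Qubit,
      ψ = a ⊗ₜ[ℂ] (b ⊗ₜ[ℂ] c) + a' ⊗ₜ[ℂ] (b' ⊗ₜ[ℂ] c')} := by
  rw [Metric.dense_iff]
  intro ψ r hr
  set E := stdBasis.equivFun with hE
  set x : Fin 2 × Fin 2 × Fin 2 → ℂ := E ψ with hx
  set v : Fin 2 × Fin 2 × Fin 2 → ℂ := fun p => yfun p - x p with hv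
  set poly : Polynomial ℂ :=
    Pexpr (fun i j k => Polynomial.C (x (i,j,k)) + Polynomial.C (v (i,j,k)) * Polynomial.X)
    with hpoly
  have hpoly_ne : poly ≠ 0 := by
    intro h0
    have h1 : Polynomial.eval 1 poly = 1 := by
      rw [hpoly, Pexpr_eval]
      simp [Pexpr, hv, yfun]
    rw [h0] at h1
    simp at h1
  have hdense : Dense {s : ℂ | Polynomial.IsRoot poly s}ᶜ :=
    Set.Countable.dense_compl ℂ (Polynomial.finite_setOf_isRoot hpoly_ne).countable
  set w : ThreeQubit := E.symm v with hw
  have hεpos : 0 < r / (‖w‖ + 1) := by positivity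
  obtain ⟨s, hs_root, hs_ball⟩ := hdense.exists_mem_open Metric.isOpen_ball
    ⟨0, Metric.mem_ball_self hεpos⟩
  refine ⟨ψ + s • w, ?_, ?_⟩
  · rw [Metric.mem_ball, dist_eq_norm, add_sub_cancel_left, norm_smul]
    calc ‖s‖ * ‖w‖ ≤ ‖s‖ * (‖w‖ + 1) := by
          gcongr; linarith
      _ < (r / (‖w‖ + 1)) * (‖w‖ + 1) := by
          have hsb : ‖s‖ < r / (‖w‖ + 1) := by
            simpa [Metric.mem_ball, dist_eq_norm] using hs_ball
          have : (0:ℝ) < ‖w‖ + 1 := by positivity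
          exact mul_lt_mul_of_pos_right hsb this
      _ = r := by field_simp
  · -- membership in the set of sums of two rank-one tensors
    have hco : E (ψ + s • w) = fun p => x p + v p * s := by
      funext p
      rw [E.map_add, E.map_smul, hw, E.apply_symm_apply]
      simp [hx, mul_comm]
    have hP : (Pexpr (fun i j k => x (i,j,k) + v (i,j,k) * s) : ℂ) ≠ 0 := by
      rw [← Pexpr_eval]
      exact hs_root
    have hexpand : ψ + s • w = ∑ p : Fin 2 × Fin 2 × Fin 2,
        (x p + v p * s) • stdBasis p := by
      have := (Module.Basis.sum_equivFun stdBasis (ψ + s • w)).symm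
      rw [this]
      refine Finset.sum_congr rfl fun p _ => ?_
      rw [show stdBasis.equivFun (ψ + s • w) p = x p + v p * s from congrFun hco p]
    obtain ⟨a, b, c, a', b', c', hd⟩ := decompose
      (x (0,0,0) + v (0,0,0) * s) (x (0,0,1) + v (0,0,1) * s)
      (x (0,1,0) + v (0,1,0) * s) (x (0,1,1) + v (0,1,1) * s)
      (x (1,0,0) + v (1,0,0) * s) (x (1,0,1) + v (1,0,1) * s)
      (x (1,1,0) + v (1,1,0) * s) (x (1,1,1) + v (1,1,1) * s)
      (by simpa [Pexpr] using hP)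
    refine ⟨a, b, c, a', b', c', ?_⟩
    rw [hexpand, ← hd]
    rw [Fintype.sum_prod_type]
    simp only [Fintype.sum_prod_type, Fin.sum_univ_two, stdBasis_apply]
    simp only [eB, Matrix.cons_val_zero, Matrix.cons_val_one, Matrix.head_cons]
    abel


end
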